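/- If μ > 0 is such that J_p(μ) = 0, then ∫₀¹ r³ [J̄_p(μr)² + J̄_{p+1}(μr)²] dr = (2p² + 3p + 1)/(3μ²) + 1/3, where J̄_q(x) := J_q(x)/J_{p+1}(μ). -/

import Mathlib

open MeasureTheory intervalIntegral

/-- The Bessel function of the first kind J_ν(x), defined by its series. -/
noncomputable def besselJ (ν x : ℝ) : ℝ :=
  ∑' k : ℕ, (-1) ^ k / ((k.factorial : ℝ) * Real.Gamma (ν + k + 1)) *
    (x / 2) ^ (2 * k) * (x / 2) ^ ν

noncomputable def bc (ν : ℝ) (k : ℕ) : ℝ := (-1) ^ k / ((k.factorial : ℝ) * Real.Gamma (ν + k + 1))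

noncomputable def bG (ν t : ℝ) : ℝ := ∑' k : ℕ, bc ν k * t ^ k

lemma gamma_arg_pos {ν : ℝ} (hν : 0 ≤ ν) (k : ℕ) : 0 < ν + k + 1 := by positivity

lemma gamma_lb {ν : ℝ} (hν : 0 ≤ ν) (k : ℕ) :
    (k.factorial : ℝ) * Real.Gamma (ν + 1) ≤ Real.Gamma (ν + k + 1) := by
  induction k with
  | zero => simp
  | succ n ih =>
    have h1 : ν + (n + 1 : ℕ) + 1 = (ν + n + 1) + 1 := by push_cast; ring
    rw [h1, Real.Gamma_add_one (gamma_arg_pos hν n).ne']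
    have h2 : (n + 1 : ℝ) ≤ ν + n + 1 := by linarith
    calc ((n+1).factorial : ℝ) * Real.Gamma (ν + 1)
        = (n + 1 : ℝ) * ((n.factorial : ℝ) * Real.Gamma (ν + 1)) := by
          push_cast [Nat.factorial_succ]; ring
      _ ≤ (ν + n + 1) * Real.Gamma (ν + n + 1) := by
          apply mul_le_mul h2 ih (by positivity)
          linarith [gamma_arg_pos hν n]

lemma bc_abs_le {ν : ℝ} (hν : 0 ≤ ν) (k : ℕ) :
    |bc ν k| ≤ (Real.Gamma (ν + 1))⁻¹ / (k.factorial : ℝ) := by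
  have hΓ := Real.Gamma_pos_of_pos (show (0:ℝ) < ν + 1 by linarith)
  have hΓk := Real.Gamma_pos_of_pos (gamma_arg_pos hν k)
  have hf : (0:ℝ) < k.factorial := by positivity
  rw [bc, abs_div, abs_pow, abs_neg, abs_one, one_pow]
  rw [abs_of_pos (by positivity)]
  rw [div_le_div_iff₀ (by positivity) hf, one_mul]
  calc (k.factorial : ℝ) = (Real.Gamma (ν+1))⁻¹ * ((k.factorial : ℝ) * Real.Gamma (ν+1)) := by
        field_simp
    _ ≤ (Real.Gamma (ν+1))⁻¹ * Real.Gamma (ν + k + 1) := by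
        exact mul_le_mul_of_nonneg_left (gamma_lb hν k) (by positivity)
    _ ≤ (Real.Gamma (ν+1))⁻¹ * ((k.factorial : ℝ) * Real.Gamma (ν + k + 1)) := by
        have h1 : (1:ℝ) ≤ (k.factorial : ℝ) := by exact_mod_cast k.factorial_pos
        exact mul_le_mul_of_nonneg_left (le_mul_of_one_le_left hΓk.le h1) (by positivity)

lemma summable_bG {ν : ℝ} (hν : 0 ≤ ν) (t : ℝ) : Summable (fun k : ℕ => bc ν k * t ^ k) := by
  apply Summable.of_norm_bounded (g := fun k => (Real.Gamma (ν + 1))⁻¹ * (|t| ^ k / k.factorial))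
  · exact (Real.summable_pow_div_factorial |t|).mul_left _
  · intro k
    rw [norm_mul, norm_pow, Real.norm_eq_abs, Real.norm_eq_abs]
    calc |bc ν k| * |t| ^ k ≤ ((Real.Gamma (ν + 1))⁻¹ / k.factorial) * |t| ^ k :=
          mul_le_mul_of_nonneg_right (bc_abs_le hν k) (by positivity)
      _ = (Real.Gamma (ν + 1))⁻¹ * (|t| ^ k / k.factorial) := by ring

lemma summable_bG_deriv {ν : ℝ} (hν : 0 ≤ ν) {R : ℝ} (hR : 0 ≤ R) :
    Summable (fun k : ℕ => (Real.Gamma (ν + 1))⁻¹ * (k * R ^ (k - 1) / k.factorial)) := by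
  apply Summable.mul_left
  rw [← summable_nat_add_iff 1]
  apply Summable.congr (Real.summable_pow_div_factorial R)
  intro n
  have : ((n+1).factorial : ℝ) = (n+1) * n.factorial := by push_cast [Nat.factorial_succ]; ring
  field_simp [this]
  rw [this, Nat.add_sub_cancel]; push_cast; ring

lemma bound_deriv_term {ν : ℝ} (hν : 0 ≤ ν) {R : ℝ} (k : ℕ) {x : ℝ} (hx : |x| ≤ R) :
    ‖bc ν k * (k * x ^ (k - 1))‖ ≤ (Real.Gamma (ν + 1))⁻¹ * (k * R ^ (k - 1) / k.factorial) := by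
  have hR : 0 ≤ R := le_trans (abs_nonneg x) hx
  rw [norm_mul, norm_mul, Real.norm_eq_abs, Real.norm_eq_abs, Real.norm_eq_abs, abs_pow]
  calc |bc ν k| * (|(k:ℝ)| * |x| ^ (k-1))
      ≤ ((Real.Gamma (ν + 1))⁻¹ / k.factorial) * ((k:ℝ) * R ^ (k-1)) := by
        apply mul_le_mul (bc_abs_le hν k)
        · rw [Nat.abs_cast]
          exact mul_le_mul_of_nonneg_left (pow_le_pow_left₀ (abs_nonneg x) hx _) (Nat.cast_nonneg k)
        · positivity
        · positivity
    _ = (Real.Gamma (ν + 1))⁻¹ * ((k:ℝ) * R ^ (k-1) / k.factorial) := by ring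

lemma bc_succ {ν : ℝ} (hν : 0 ≤ ν) (k : ℕ) : bc ν (k+1) * (k+1 : ℝ) = -(bc (ν+1) k) := by
  have hΓ : Real.Gamma (ν + (k+1:ℕ) + 1) = Real.Gamma ((ν+1) + k + 1) := by
    congr 1; push_cast; ring
  have hΓne : Real.Gamma ((ν+1) + k + 1) ≠ 0 :=
    (Real.Gamma_pos_of_pos (by positivity)).ne'
  have hfact : ((k+1).factorial : ℝ) = (k+1) * k.factorial := by
    push_cast [Nat.factorial_succ]; ring
  have hfne : (k.factorial : ℝ) ≠ 0 := by positivity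
  rw [bc, bc, hΓ, hfact, pow_succ]
  field_simp

lemma hasDerivAt_bG {ν : ℝ} (hν : 0 ≤ ν) (t : ℝ) :
    HasDerivAt (bG ν) (-(bG (ν+1) t)) t := by
  set R : ℝ := |t| + 1 with hRdef
  have hR : 0 ≤ R := by positivity
  set s : Set ℝ := Metric.ball 0 R with hs
  have hts : t ∈ s := by simp [hs, hRdef, Real.norm_eq_abs]
  have key : HasDerivAt (bG ν) (∑' k : ℕ, bc ν k * (k * t ^ (k-1))) t := by
    apply hasDerivAt_of_tendstoUniformlyOn (Metric.isOpen_ball)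
      (f := fun N x => ∑ k ∈ Finset.range N, bc ν k * x ^ k)
      (f' := fun N x => ∑ k ∈ Finset.range N, bc ν k * (k * x ^ (k-1))) (l := Filter.atTop)
      ?_ ?_ ?_ hts
    · apply tendstoUniformlyOn_tsum_nat (summable_bG_deriv hν hR)
      intro k x hxs
      have : |x| ≤ R := by
        rw [Metric.mem_ball, Real.dist_eq, sub_zero] at hxs; linarith
      exact bound_deriv_term hν k this
    · filter_upwards with N x _
      apply HasDerivAt.fun_sum
      intro k _
      exact (hasDerivAt_pow k x).const_mul (bc ν k)
    · intro x _
      exact ((summable_bG hν x).hasSum).tendsto_sum_nat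
  convert key using 1
  have hsum : Summable (fun k : ℕ => bc ν k * (k * t ^ (k-1))) := by
    apply Summable.of_norm_bounded (summable_bG_deriv hν hR)
    intro k; exact bound_deriv_term hν k (by linarith [abs_nonneg t])
  rw [hsum.tsum_eq_zero_add]
  simp only [Nat.cast_zero, zero_mul, mul_zero, zero_add]
  rw [bG, ← tsum_neg]
  apply tsum_congr
  intro k
  have h1 : (k + 1 : ℕ) - 1 = k := rfl
  push_cast [h1]
  rw [show bc ν (k+1) * ((k+1 : ℝ) * t ^ k) = (bc ν (k+1) * (k+1:ℝ)) * t ^ k by ring,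
    bc_succ hν k]
  ring

lemma bc_rec0 {ν : ℝ} (hν : 0 ≤ ν) : (ν+1) * bc (ν+1) 0 - bc ν 0 = 0 := by
  have h1 : Real.Gamma ((ν+1) + (0:ℕ) + 1) = (ν+1) * Real.Gamma (ν + (0:ℕ) + 1) := by
    push_cast
    rw [show ν + 1 + 0 + 1 = (ν + 0 + 1) + 1 by ring, Real.Gamma_add_one (by positivity)]
    norm_num
  have hΓ : Real.Gamma (ν + (0:ℕ) + 1) ≠ 0 := (Real.Gamma_pos_of_pos (by positivity)).ne'
  rw [bc, bc, h1]
  field_simp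
  simp

lemma bc_rec_succ {ν : ℝ} (hν : 0 ≤ ν) (k : ℕ) :
    (ν+1) * bc (ν+1) (k+1) - bc ν (k+1) = bc (ν+2) k := by
  have hg : (0:ℝ) < ν + k + 2 := by positivity
  have hΓpos : 0 < Real.Gamma (ν + k + 2) := Real.Gamma_pos_of_pos (by positivity)
  have h1 : Real.Gamma ((ν+1) + (k+1:ℕ) + 1) = (ν+k+2) * Real.Gamma (ν + k + 2) := by
    rw [show ((ν+1) + (k+1:ℕ) + 1 : ℝ) = (ν + k + 2) + 1 by push_cast; ring,
      Real.Gamma_add_one hg.ne']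
  have h2 : Real.Gamma (ν + (k+1:ℕ) + 1) = Real.Gamma (ν + k + 2) := by
    congr 1; push_cast; ring
  have h3 : Real.Gamma ((ν+2) + k + 1) = (ν+k+2) * Real.Gamma (ν + k + 2) := by
    rw [show ((ν+2) + (k:ℕ) + 1 : ℝ) = (ν + k + 2) + 1 by push_cast; ring,
      Real.Gamma_add_one hg.ne']
  have hfact : ((k+1).factorial : ℝ) = (k+1) * k.factorial := by
    push_cast [Nat.factorial_succ]; ring
  have hfne : (k.factorial : ℝ) ≠ 0 := by positivity
  rw [bc, bc, bc, h1, h2, h3, hfact, pow_succ]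
  have hk1 : (k:ℝ) + 1 ≠ 0 := by positivity
  field_simp
  ring

lemma bG_rec {ν : ℝ} (hν : 0 ≤ ν) (t : ℝ) :
    (ν+1) * bG (ν+1) t - bG ν t = t * bG (ν+2) t := by
  have hs1 : Summable (fun k : ℕ => (ν+1) * (bc (ν+1) k * t ^ k)) :=
    (summable_bG (by linarith) t).mul_left _
  have hs2 := summable_bG hν t
  have hdiff : Summable (fun k : ℕ => (ν+1) * (bc (ν+1) k * t ^ k) - bc ν k * t ^ k) :=
    hs1.sub hs2
  have hL : (ν+1) * bG (ν+1) t - bG ν t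
      = ∑' k : ℕ, ((ν+1) * (bc (ν+1) k * t ^ k) - bc ν k * t ^ k) := by
    rw [bG, bG, ← tsum_mul_left, (hs1.tsum_sub hs2).symm]
  rw [hL, hdiff.tsum_eq_zero_add]
  have h0 : (ν+1) * (bc (ν+1) 0 * t ^ 0) - bc ν 0 * t ^ 0 = 0 := by
    have := bc_rec0 hν; simp; linarith [this]
  rw [h0, zero_add, bG, ← tsum_mul_left]
  apply tsum_congr
  intro k
  have : (ν+1) * (bc (ν+1) (k+1) * t ^ (k+1)) - bc ν (k+1) * t ^ (k+1)
      = ((ν+1) * bc (ν+1) (k+1) - bc ν (k+1)) * t ^ (k+1) := by ring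
  rw [this, bc_rec_succ hν k, pow_succ]
  ring

lemma besselJ_eq (ν x : ℝ) : besselJ ν x = (x/2) ^ ν * bG ν ((x/2)^2) := by
  rw [besselJ, bG, mul_comm, ← tsum_mul_right]
  apply tsum_congr
  intro k
  rw [bc, pow_mul]

lemma continuous_bG {ν : ℝ} (hν : 0 ≤ ν) : Continuous (bG ν) :=
  continuous_iff_continuousAt.mpr fun t => (hasDerivAt_bG hν t).differentiableAt.continuousAt

lemma continuous_besselJ {ν : ℝ} (hν : 0 ≤ ν) : Continuous (besselJ ν) := by
  have h : besselJ ν = fun x => (x/2) ^ ν * bG ν ((x/2)^2) := funext (besselJ_eq ν)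
  rw [h]
  apply Continuous.mul
  · apply continuous_iff_continuousAt.mpr
    intro x
    have : ContinuousAt ((fun z : ℝ => z ^ ν) ∘ (fun y : ℝ => y / 2)) x :=
      ContinuousAt.comp (Real.continuousAt_rpow_const (x/2) ν (.inr hν))
        (continuousAt_id.div_const (2:ℝ))
    exact this
  · exact (continuous_bG hν).comp (((continuous_id (X := ℝ)).div_const (2:ℝ)).pow 2)

lemma hasDerivAt_besselJ {ν x : ℝ} (hν : 0 ≤ ν) (hx : 0 < x) :
    HasDerivAt (besselJ ν) (ν / x * besselJ ν x - besselJ (ν+1) x) x := by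
  have hhalf : (0:ℝ) < x / 2 := by linarith
  have h : besselJ ν = fun y => (y/2) ^ ν * bG ν ((y/2)^2) := funext (besselJ_eq ν)
  rw [h]
  have hinner : HasDerivAt (fun y : ℝ => y / 2) (1/2 : ℝ) x := (hasDerivAt_id x).div_const 2
  have h1 : HasDerivAt (fun y : ℝ => (y/2) ^ ν) (ν * (x/2) ^ (ν - 1) * (1/2)) x := by
    exact (Real.hasDerivAt_rpow_const (p := ν) (Or.inl hhalf.ne')).comp x hinner
  have h2 : HasDerivAt (fun y : ℝ => bG ν ((y/2)^2))
      (-(bG (ν+1) ((x/2)^2)) * (2 * (x/2) ^ 1 * (1/2))) x :=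
    by
      have h3 := (hasDerivAt_bG hν ((x/2)^2)).comp x (hinner.fun_pow 2)
      exact (h3 : HasDerivAt (fun y : ℝ => bG ν ((y/2)^2)) _ x).congr_deriv (by norm_num)
  have := h1.fun_mul h2
  refine this.congr_deriv ?_
  simp only [besselJ_eq]
  have e1 : (x/2) ^ (ν - 1) = (x/2) ^ ν / (x/2) := by
    rw [Real.rpow_sub hhalf, Real.rpow_one]
  have e2 : (x/2) ^ (ν + 1) = (x/2) ^ ν * (x/2) := Real.rpow_add_one hhalf.ne' ν
  rw [e1, e2]
  have hxne : x ≠ 0 := hx.ne'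
  field_simp
  ring

lemma besselJ_rec {ν x : ℝ} (hν : 0 ≤ ν) (hx : 0 < x) :
    besselJ ν x + besselJ (ν+2) x = (2*(ν+1)/x) * besselJ (ν+1) x := by
  have hhalf : (0:ℝ) < x / 2 := by linarith
  have e1 : (x/2:ℝ) ^ (ν + 1) = (x/2) ^ ν * (x/2) := Real.rpow_add_one hhalf.ne' ν
  have e2 : (x/2:ℝ) ^ (ν + 2) = (x/2) ^ ν * (x/2) * (x/2) := by
    rw [show ν + 2 = (ν + 1) + 1 by ring, Real.rpow_add_one hhalf.ne', e1]
  have hrec := bG_rec hν ((x/2)^2)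
  rw [besselJ_eq, besselJ_eq, besselJ_eq, e1, e2]
  have hxne : x ≠ 0 := hx.ne'
  have : bG ν ((x/2)^2) = (ν+1) * bG (ν+1) ((x/2)^2) - (x/2)^2 * bG (ν+2) ((x/2)^2) := by
    linarith [hrec]
  rw [this]
  field_simp
  ring

lemma hasDerivAt_besselJ' {ν x : ℝ} (hν : 0 ≤ ν) (hx : 0 < x) :
    HasDerivAt (besselJ (ν+1)) (besselJ ν x - (ν+1) / x * besselJ (ν+1) x) x := by
  have h := hasDerivAt_besselJ (ν := ν+1) (by linarith) hx
  convert h using 1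
  have hrec := besselJ_rec hν hx
  have hxne : x ≠ 0 := hx.ne'
  have : besselJ (ν+1+1) x = (2*(ν+1)/x) * besselJ (ν+1) x - besselJ ν x := by
    rw [show ν+1+1 = ν+2 by ring]; linarith [hrec]
  rw [this]
  field_simp
  ring

/-- If μ > 0 is a zero of J_p then
∫₀¹ r³[J̄_p(μr)² + J̄_{p+1}(μr)²] dr = (2p²+3p+1)/(3μ²) + 1/3,
where J̄_q(x) = J_q(x)/J_{p+1}(μ). -/
theorem radial_integral_cubed (p μ : ℝ) (hp : 0 ≤ p) (hμ : 0 < μ)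
    (hzero : besselJ p μ = 0) (hne : besselJ (p + 1) μ ≠ 0) :
    ∫ r in (0 : ℝ)..1, r ^ 3 *
        ((besselJ p (μ * r) / besselJ (p + 1) μ) ^ 2 +
         (besselJ (p + 1) (μ * r) / besselJ (p + 1) μ) ^ 2)
      = (2 * p ^ 2 + 3 * p + 1) / (3 * μ ^ 2) + 1 / 3 := by
  set b1 : ℝ := besselJ (p + 1) μ with hb1
  set A : ℝ → ℝ := fun r => besselJ p (μ * r) with hA
  set B : ℝ → ℝ := fun r => besselJ (p + 1) (μ * r) with hB
  set F : ℝ → ℝ := fun r =>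
    r^4/3 * ((A r)^2 + (B r)^2)
    - (2*p+1)/(3*μ) * (r^3 * (A r * B r))
    + p*(2*p+1)/(3*μ^2) * (r^2 * (A r)^2)
    + (p+1)*(2*p+1)/(3*μ^2) * (r^2 * (B r)^2)
    - 2*p*(p+1)*(2*p+1)/(3*μ^3) * (r * (A r * B r)) with hF
  have hcontA : Continuous A := (continuous_besselJ hp).comp (continuous_const.mul continuous_id)
  have hcontB : Continuous B :=
    (continuous_besselJ (by linarith : (0:ℝ) ≤ p + 1)).comp (continuous_const.mul continuous_id)
  have hcontF : Continuous F := by fun_prop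
  have hcontI : Continuous (fun r : ℝ => r ^ 3 * ((A r)^2 + (B r)^2)) := by fun_prop
  -- derivative of F on (0,1)
  have hderiv : ∀ r ∈ Set.Ioo (0:ℝ) 1, HasDerivAt F (r ^ 3 * ((A r)^2 + (B r)^2)) r := by
    intro r hr
    obtain ⟨hr0, hr1⟩ := hr
    have hμr : 0 < μ * r := by positivity
    have hmul : HasDerivAt (fun s : ℝ => μ * s) μ r := by
      simpa using (hasDerivAt_id r).const_mul μ
    have hDA : HasDerivAt A ((p / (μ*r) * A r - B r) * μ) r :=
      (hasDerivAt_besselJ hp hμr).comp r hmul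
    have hDB : HasDerivAt B ((A r - (p+1) / (μ*r) * B r) * μ) r :=
      (hasDerivAt_besselJ' hp hμr).comp r hmul
    set A' : ℝ := (p / (μ*r) * A r - B r) * μ with hA'
    set B' : ℝ := (A r - (p+1) / (μ*r) * B r) * μ with hB'
    have key : HasDerivAt F
        ( (4*r^3)/3 * ((A r)^2 + (B r)^2) + r^4/3 * (2 * A r ^ 1 * A' + 2 * B r ^ 1 * B')
        - (2*p+1)/(3*μ) * (3*r^2 * (A r * B r) + r^3 * (A' * B r + A r * B'))
        + p*(2*p+1)/(3*μ^2) * (2*r * (A r)^2 + r^2 * (2 * A r ^ 1 * A'))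
        + (p+1)*(2*p+1)/(3*μ^2) * (2*r * (B r)^2 + r^2 * (2 * B r ^ 1 * B'))
        - 2*p*(p+1)*(2*p+1)/(3*μ^3) * (1 * (A r * B r) + r * (A' * B r + A r * B')) ) r := by
      apply HasDerivAt.sub
      apply HasDerivAt.add
      apply HasDerivAt.add
      apply HasDerivAt.sub
      · exact ((((hasDerivAt_pow 4 r).div_const 3)).mul ((hDA.pow 2).add (hDB.pow 2))).congr_deriv
          (by norm_num)
      · exact (((hasDerivAt_pow 3 r).mul (hDA.mul hDB)).const_mul _).congr_deriv (by norm_num)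
      · exact (((hasDerivAt_pow 2 r).mul (hDA.pow 2)).const_mul _).congr_deriv (by norm_num)
      · exact (((hasDerivAt_pow 2 r).mul (hDB.pow 2)).const_mul _).congr_deriv (by norm_num)
      · exact (((hasDerivAt_id r).mul (hDA.mul hDB)).const_mul _).congr_deriv (by norm_num)
    convert key using 1
    rw [hA', hB']
    have hrne : r ≠ 0 := hr0.ne'
    have hμne : μ ≠ 0 := hμ.ne'
    field_simp
    ring
  -- the integral of the unnormalized integrand
  have hint : ∫ r in (0:ℝ)..1, r ^ 3 * ((A r)^2 + (B r)^2) = F 1 - F 0 := by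
    apply intervalIntegral.integral_eq_sub_of_hasDeriv_right_of_le (by norm_num)
      (hcontF.continuousOn)
      (fun x hx => ((hderiv x hx).hasDerivWithinAt))
      (hcontI.intervalIntegrable 0 1)
  have hF0 : F 0 = 0 := by
    simp [hF]
  have hA1 : A 1 = 0 := by simp [hA, hzero]
  have hB1 : B 1 = b1 := by simp [hB, hb1]
  have hF1 : F 1 = b1^2 * ((2 * p ^ 2 + 3 * p + 1) / (3 * μ ^ 2) + 1 / 3) := by
    rw [hF]
    simp only [hA1, hB1]
    have hμne : μ ≠ 0 := hμ.ne'
    field_simp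
    ring
  -- rewrite the goal integrand
  have hb1ne : b1 ≠ 0 := hne
  have hcongr : ∀ r : ℝ, r ^ 3 * ((A r / b1)^2 + (B r / b1)^2)
      = (b1^2)⁻¹ * (r ^ 3 * ((A r)^2 + (B r)^2)) := by
    intro r; field_simp
  calc ∫ r in (0:ℝ)..1, r ^ 3 * ((A r / b1)^2 + (B r / b1)^2)
      = ∫ r in (0:ℝ)..1, (b1^2)⁻¹ * (r ^ 3 * ((A r)^2 + (B r)^2)) := by
        simp_rw [hcongr]
    _ = (b1^2)⁻¹ * ∫ r in (0:ℝ)..1, r ^ 3 * ((A r)^2 + (B r)^2) := by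
        rw [intervalIntegral.integral_const_mul]
    _ = (2 * p ^ 2 + 3 * p + 1) / (3 * μ ^ 2) + 1 / 3 := by
        rw [hint, hF0, hF1]
        field_simp
        ring
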